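/- Fix integers $m \ge 2$ and $n_1, \dots, n_m \ge 2$. Set $\mathcal{N} = n_1 \cdots n_m$, $\mathcal{N}_i = \mathcal{N}/n_i$, and $s = \gcd(\mathcal{N}_1, \dots, \mathcal{N}_m)$. Let $\hat{G} = \mathbb{Z}^m / L$, where $L$ is the subgroup of $\mathbb{Z}^m$ generated by $n_1 e_1 - n_i e_i$ for $i = 2, \dots, m$, and let $w : \hat{G} \to \mathbb{Z}$ be the homomorphism induced by $e_i \mapsto \mathcal{N}_i / s$ (this is well defined since $n_1 \mathcal{N}_1 = n_i \mathcal{N}_i$). Let $S \subseteq \hat{G}$ be the image of $\mathbb{N}^m$ under the quotient map. Then the gap set $\{ g \in \hat{G} : w(g) \ge 0 \} \setminus S$ is finite, and its cardinality $\delta$ satisfies $2\delta = (m-1)\mathcal{N} - \sum_{i=1}^m \mathcal{N}_i + s$. -/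

import Mathlib

open Finset
namespace NWaux
variable {m : ℕ}



/-- Bezout for `Finset.gcd` over `ℤ`. -/
lemma gcd_eq_sum {ι : Type*} [DecidableEq ι] (t : Finset ι) (f : ι → ℤ) :
    ∃ c : ι → ℤ, t.gcd f = ∑ i ∈ t, c i * f i := by
  classical
  induction t using Finset.induction_on with
  | empty => exact ⟨0, by simp⟩
  | @insert a t ha ih =>
    obtain ⟨c, hc⟩ := ih
    refine ⟨fun i => if i = a then (f a).gcdA (t.gcd f) else c i * (f a).gcdB (t.gcd f), ?_⟩
    rw [Finset.gcd_insert, ← Int.coe_gcd, Int.gcd_eq_gcd_ab, Finset.sum_insert ha]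
    beta_reduce
    rw [if_pos rfl]
    have hcong : ∑ i ∈ t, (if i = a then (f a).gcdA (t.gcd f) else c i * (f a).gcdB (t.gcd f)) * f i
        = ∑ i ∈ t, c i * (f a).gcdB (t.gcd f) * f i :=
      Finset.sum_congr rfl fun i hi => by rw [if_neg (by rintro rfl; exact ha hi)]
    rw [hcong]
    have h2 : ∑ i ∈ t, c i * (f a).gcdB (t.gcd f) * f i
        = (∑ i ∈ t, c i * f i) * (f a).gcdB (t.gcd f) := by
      rw [Finset.sum_mul]; exact Finset.sum_congr rfl fun i _ => by ring
    rw [h2, ← hc]; ring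

lemma gcd_nonneg {ι : Type*} (t : Finset ι) (f : ι → ℤ) : 0 ≤ t.gcd f := by
  classical
  induction t using Finset.induction_on with
  | empty => simp
  | @insert a t ha ih =>
    rw [Finset.gcd_insert, ← Int.coe_gcd]
    positivity



/-- canonical `i0`-coordinate functional -/
def A0 (i0 : Fin m) (n : Fin m → ℤ) (x : Fin m → ℤ) : ℤ :=
  x i0 + n i0 * ∑ j ∈ Finset.univ.erase i0, x j / n j

lemma mem_L_iff (i0 : Fin m) (n : Fin m → ℤ) (hn : ∀ i, 0 < n i) (x : Fin m → ℤ) :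
    x ∈ AddSubgroup.closure
      {v | ∃ i : Fin m, i ≠ i0 ∧ v = Pi.single i0 (n i0) - Pi.single i (n i)} ↔
      (∀ j, j ≠ i0 → n j ∣ x j) ∧ A0 i0 n x = 0 := by
  classical
  have hne : ∀ j, n j ≠ 0 := fun j => (hn j).ne'
  set M : AddSubgroup (Fin m → ℤ) :=
  { carrier := {x | (∀ j, j ≠ i0 → n j ∣ x j) ∧ A0 i0 n x = 0}
    zero_mem' := by simp [A0]
    add_mem' := by
      rintro a b ⟨ha1, ha2⟩ ⟨hb1, hb2⟩
      refine ⟨fun j hj => dvd_add (ha1 j hj) (hb1 j hj), ?_⟩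
      have hsum : ∑ j ∈ univ.erase i0, (a j + b j) / n j
          = ∑ j ∈ univ.erase i0, (a j / n j + b j / n j) := by
        refine Finset.sum_congr rfl fun j hj => ?_
        have hj' : j ≠ i0 := (Finset.mem_erase.1 hj).1
        obtain ⟨u, hu⟩ := ha1 j hj'
        obtain ⟨v, hv⟩ := hb1 j hj'
        rw [hu, hv, ← mul_add, Int.mul_ediv_cancel_left _ (hne j),
          Int.mul_ediv_cancel_left _ (hne j), Int.mul_ediv_cancel_left _ (hne j)]
      simp only [A0, Pi.add_apply] at ha2 hb2 ⊢
      rw [hsum, Finset.sum_add_distrib, mul_add]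
      linarith
    neg_mem' := by
      rintro a ⟨ha1, ha2⟩
      refine ⟨fun j hj => (ha1 j hj).neg_right, ?_⟩
      have hsum : ∑ j ∈ univ.erase i0, (-(a j)) / n j
          = ∑ j ∈ univ.erase i0, -(a j / n j) := by
        refine Finset.sum_congr rfl fun j hj => ?_
        obtain ⟨u, hu⟩ := ha1 j (Finset.mem_erase.1 hj).1
        rw [hu, ← mul_neg, Int.mul_ediv_cancel_left _ (hne j),
          Int.mul_ediv_cancel_left _ (hne j)]
      simp only [A0, Pi.neg_apply] at ha2 ⊢
      rw [hsum, Finset.sum_neg_distrib]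
      linarith }
  constructor
  · intro hx
    refine (AddSubgroup.closure_le M).2 ?_ hx
    rintro v ⟨i, hi, rfl⟩
    have hvj : ∀ j, j ≠ i0 →
        ((Pi.single i0 (n i0) - Pi.single i (n i) : Fin m → ℤ)) j
          = (if j = i then -n i else 0) := by
      intro j hj
      by_cases hji : j = i
      · subst hji; simp [Pi.single_eq_of_ne hj, Pi.single_eq_same]
      · simp [Pi.single_eq_of_ne hj, Pi.single_eq_of_ne hji, hji]
    refine ⟨fun j hj => ?_, ?_⟩
    · rw [hvj j hj]
      by_cases hji : j = i
      · subst hji; simp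
      · simp [hji]
    · have hv0 : ((Pi.single i0 (n i0) - Pi.single i (n i) : Fin m → ℤ)) i0 = n i0 := by
        simp [Pi.single_eq_same, Pi.single_eq_of_ne (Ne.symm hi)]
      have hsum : ∑ j ∈ univ.erase i0,
          ((Pi.single i0 (n i0) - Pi.single i (n i) : Fin m → ℤ)) j / n j = -1 := by
        rw [Finset.sum_eq_single_of_mem i (Finset.mem_erase.2 ⟨hi, Finset.mem_univ i⟩)]
        · rw [hvj i hi, if_pos rfl]
          have h : -n i = n i * (-1) := by ring
          rw [h, Int.mul_ediv_cancel_left _ (hne i)]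
        · intro j hj hji
          rw [hvj j (Finset.mem_erase.1 hj).1, if_neg hji, Int.zero_ediv]
      simp only [A0, hv0, hsum]
      ring
  · rintro ⟨h1, h2⟩
    simp only [A0] at h2
    have hx : x = ∑ j ∈ univ.erase i0,
        (-(x j / n j)) • ((Pi.single i0 (n i0) - Pi.single j (n j) : Fin m → ℤ)) := by
      funext k
      rw [Finset.sum_apply]
      by_cases hk : k = i0
      · subst hk
        have hterm : ∀ j ∈ univ.erase k,
            ((-(x j / n j)) • ((Pi.single k (n k) - Pi.single j (n j) : Fin m → ℤ))) k
              = -(x j / n j) * n k := by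
          intro j hj
          have hj' : j ≠ k := (Finset.mem_erase.1 hj).1
          simp [Pi.single_eq_same, Pi.single_eq_of_ne (Ne.symm hj')]
        rw [Finset.sum_congr rfl hterm]
        have hneg : ∑ j ∈ univ.erase k, -(x j / n j) * n k
            = -(∑ j ∈ univ.erase k, x j / n j) * n k := by
          rw [← Finset.sum_mul, Finset.sum_neg_distrib]
        rw [hneg]
        linarith
      · have hk' : k ∈ univ.erase i0 := Finset.mem_erase.2 ⟨hk, Finset.mem_univ k⟩
        rw [Finset.sum_eq_single_of_mem k hk']
        · obtain ⟨u, hu⟩ := h1 k hk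
          simp [Pi.single_eq_same, Pi.single_eq_of_ne hk, hu,
            Int.mul_ediv_cancel_left _ (hne k)]
          ring
        · intro j hj hjk
          have e1 := Pi.single_eq_of_ne (M := fun _ : Fin m => ℤ) hk (n i0)
          have e2 := Pi.single_eq_of_ne (M := fun _ : Fin m => ℤ) (Ne.symm hjk) (n j)
          simp [e1, e2]
    rw [hx]
    refine AddSubgroup.sum_mem _ fun j hj => AddSubgroup.zsmul_mem _
      (AddSubgroup.subset_closure ?_) _
    exact ⟨j, (Finset.mem_erase.1 hj).1, rfl⟩



def Sv (n : Fin m → ℤ) (N : ℤ) (x : Fin m → ℤ) : ℤ := ∑ i, x i * (N / n i)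

noncomputable def boxA (i0 : Fin m) (n : Fin m → ℤ) : Finset (Fin m → ℤ) :=
  Fintype.piFinset fun i => if i = i0 then ({0} : Finset ℤ) else Finset.Ico 0 (n i)

lemma mem_boxA (i0 : Fin m) (n : Fin m → ℤ) (a : Fin m → ℤ) :
    a ∈ boxA i0 n ↔ a i0 = 0 ∧ ∀ i, i ≠ i0 → 0 ≤ a i ∧ a i < n i := by
  simp only [boxA, Fintype.mem_piFinset]
  constructor
  · intro h
    refine ⟨by simpa using h i0, fun i hi => ?_⟩
    have := h i
    rw [if_neg hi] at this
    simpa [Finset.mem_Ico] using this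
  · rintro ⟨h0, h⟩ i
    by_cases hi : i = i0
    · subst hi; simp [h0]
    · rw [if_neg hi, Finset.mem_Ico]; exact h i hi

lemma K_eq (hm : 1 ≤ m) (i0 : Fin m) (n : Fin m → ℤ) (hn : ∀ i, 0 < n i)
    (N : ℤ) (hN : N = ∏ i, n i) (s : ℤ)
    (hs : s = Finset.gcd Finset.univ (fun i => N / n i))
    [DecidablePred fun a : Fin m → ℤ => (N / n i0) ∣ Sv n N a] :
    (((boxA i0 n).filter fun a => (N / n i0) ∣ Sv n N a).card : ℤ) = s := by
  classical
  have hne : ∀ j, n j ≠ 0 := fun j => (hn j).ne'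
  have hNpos : 0 < N := hN ▸ Finset.prod_pos fun i _ => hn i
  have hdvdN : ∀ i, n i ∣ N := fun i => hN ▸ Finset.dvd_prod_of_mem n (mem_univ i)
  have hNi : ∀ i, n i * (N / n i) = N := fun i => Int.mul_ediv_cancel' (hdvdN i)
  have hNipos : ∀ i, 0 < N / n i := by
    intro i
    rcases lt_trichotomy (N / n i) 0 with h | h | h
    · nlinarith [hNi i, hn i]
    · rw [← hNi i, h, mul_zero] at hNpos; exact absurd hNpos (lt_irrefl 0)
    · exact h
  set N0 := N / n i0 with hN0def
  have hN0pos : 0 < N0 := hNipos i0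
  have hN0N : N0 ∣ N := ⟨n i0, by rw [← hNi i0]; ring⟩
  set M0 := N0.toNat with hM0def
  have hM0cast : (M0 : ℤ) = N0 := Int.toNat_of_nonneg hN0pos.le
  have hM0ne : M0 ≠ 0 := by
    intro h; rw [h] at hM0cast; simp at hM0cast; omega
  set A := boxA i0 n with hA
  set F : (Fin m → ℤ) → ZMod M0 := fun a => ((Sv n N a : ℤ) : ZMod M0) with hF
  -- congruence for F
  have hFcong : ∀ x y : Fin m → ℤ, (∀ i, n i ∣ x i - y i) → F x = F y := by
    intro x y h
    have hsub : Sv n N x - Sv n N y = ∑ i, (x i - y i) * (N / n i) := by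
      rw [Sv, Sv, ← Finset.sum_sub_distrib]
      exact Finset.sum_congr rfl fun i _ => by ring
    have hd : N0 ∣ Sv n N x - Sv n N y := by
      rw [hsub]
      refine Finset.dvd_sum fun i _ => ?_
      obtain ⟨t, ht⟩ := h i
      have h2 : (x i - y i) * (N / n i) = t * (n i * (N / n i)) := by rw [ht]; ring
      rw [hNi i] at h2
      rw [h2]
      exact (hN0N).mul_left t
    have hd' : (M0 : ℤ) ∣ Sv n N y - Sv n N x := by
      rw [hM0cast]; exact dvd_sub_comm.mp hd
    exact (ZMod.intCast_eq_intCast_iff _ _ _).2 (Int.modEq_iff_dvd.2 hd')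
  -- truncated addition on the box
  set nu : (Fin m → ℤ) → (Fin m → ℤ) :=
    fun a i => if i = i0 then 0 else (n i - a i) % n i with hnu
  set add2 : (Fin m → ℤ) → (Fin m → ℤ) → (Fin m → ℤ) :=
    fun a b i => if i = i0 then 0 else (a i + b i) % n i with hadd2
  have hnuA : ∀ a ∈ A, nu a ∈ A := by
    intro a ha
    rw [hA, mem_boxA]
    refine ⟨by simp [hnu], fun i hi => ?_⟩
    simp only [hnu, if_neg hi]
    exact ⟨Int.emod_nonneg _ (hne i), Int.emod_lt_of_pos _ (hn i)⟩
  have hadd2A : ∀ a b, add2 a b ∈ A := by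
    intro a b
    rw [hA, mem_boxA]
    refine ⟨by simp [hadd2], fun i hi => ?_⟩
    simp only [hadd2, if_neg hi]
    exact ⟨Int.emod_nonneg _ (hne i), Int.emod_lt_of_pos _ (hn i)⟩
  have hFadd2 : ∀ a b : Fin m → ℤ, a i0 = 0 → b i0 = 0 →
      F (add2 a b) = F a + F b := by
    intro a b ha0 hb0
    have h1 : F (add2 a b) = F (fun i => a i + b i) := by
      apply hFcong
      intro i
      by_cases hi : i = i0
      · subst hi; simp [hadd2, ha0, hb0]
      · simp only [hadd2, if_neg hi]
        have := Int.emod_emod_of_dvd (a i + b i) (dvd_refl (n i))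
        -- (a i + b i) % n i - (a i + b i) = -(n i * ((a i + b i) / n i))
        have h2 : (a i + b i) % n i - (a i + b i) = -(n i * ((a i + b i) / n i)) := by
          rw [Int.emod_def]; ring
        rw [h2]
        exact dvd_neg.2 ⟨_, rfl⟩
    rw [h1]
    have h3 : Sv n N (fun i => a i + b i) = Sv n N a + Sv n N b := by
      rw [Sv, Sv, Sv, ← Finset.sum_add_distrib]
      exact Finset.sum_congr rfl fun i _ => by ring
    show ((Sv n N (fun i => a i + b i) : ℤ) : ZMod M0) = _
    rw [h3]
    push_cast
    rfl
  have hnu_add : ∀ b ∈ A, ∀ i, i ≠ i0 → (b i + nu b i) % n i = 0 := by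
    intro b hb i hi
    simp only [hnu, if_neg hi]
    rw [add_comm, Int.emod_add_emod]
    have : n i - b i + b i = n i := by ring
    rw [this, Int.emod_self]
  have hFnu : ∀ b ∈ A, F (nu b) = - F b := by
    intro b hb
    have hb0 : b i0 = 0 := ((mem_boxA i0 n b).1 (hA ▸ hb)).1
    have h0 : F b + F (nu b) = F (add2 b (nu b)) := (hFadd2 b (nu b) hb0 (by simp [hnu])).symm
    have hzero : add2 b (nu b) = fun _ => (0 : ℤ) := by
      funext i
      by_cases hi : i = i0
      · subst hi; simp [hadd2]
      · simp only [hadd2, if_neg hi]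
        exact hnu_add b hb i hi
    rw [hzero] at h0
    have : F (fun _ => (0:ℤ)) = 0 := by
      show ((Sv n N (fun _ => (0:ℤ)) : ℤ) : ZMod M0) = 0
      simp [Sv]
    rw [this] at h0
    exact eq_neg_of_add_eq_zero_right h0
  have hA0 : ∀ a ∈ A, a i0 = 0 := fun a ha => ((mem_boxA i0 n a).1 (hA ▸ ha)).1
  have hAbnd : ∀ a ∈ A, ∀ i, i ≠ i0 → 0 ≤ a i ∧ a i < n i :=
    fun a ha => ((mem_boxA i0 n a).1 (hA ▸ ha)).2
  -- cancellation
  have hcancel : ∀ x ∈ A, ∀ b c : Fin m → ℤ, (∀ i, i ≠ i0 → (b i + c i) % n i = 0) →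
      add2 (add2 x b) c = x := by
    intro x hx b c h
    funext i
    by_cases hi : i = i0
    · subst hi; simp only [hadd2, if_pos rfl]; exact (hA0 x hx).symm
    · simp only [hadd2, if_neg hi]
      rw [Int.emod_add_emod]
      obtain ⟨t, ht⟩ := Int.dvd_of_emod_eq_zero (h i hi)
      have h2 : x i + b i + c i = x i + n i * t := by linarith
      rw [h2, Int.add_mul_emod_self_left]
      exact Int.emod_eq_of_lt (hAbnd x hx i hi).1 (hAbnd x hx i hi).2
  have hnu_add' : ∀ b ∈ A, ∀ i, i ≠ i0 → (nu b i + b i) % n i = 0 := by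
    intro b hb i hi
    rw [add_comm]; exact hnu_add b hb i hi
  -- all fibers of F over the image have the same cardinality
  set K0 := (A.filter fun x => F x = 0).card with hK0
  have hfiber : ∀ b ∈ A, (A.filter fun x => F x = F b).card = K0 := by
    intro b hb
    rw [hK0]
    apply Finset.card_nbij' (fun x => add2 x (nu b)) (fun y => add2 y b)
    · intro x hx
      rw [Finset.mem_coe, Finset.mem_filter] at hx ⊢
      refine ⟨hadd2A _ _, ?_⟩
      rw [hFadd2 _ _ (hA0 x hx.1) (by simp [hnu]), hFnu b hb, hx.2]
      ring
    · intro y hy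
      rw [Finset.mem_coe, Finset.mem_filter] at hy ⊢
      refine ⟨hadd2A _ _, ?_⟩
      rw [hFadd2 _ _ (hA0 y hy.1) (hA0 b hb), hy.2]
      ring
    · intro x hx
      rw [Finset.mem_coe, Finset.mem_filter] at hx
      exact hcancel x hx.1 (nu b) b (hnu_add' b hb)
    · intro y hy
      rw [Finset.mem_coe, Finset.mem_filter] at hy
      exact hcancel y hy.1 b (nu b) (hnu_add b hb)
  -- the image of F
  set s' := Finset.gcd (Finset.univ.erase i0) (fun i => N / n i) with hs'def
  have hs'nonneg : 0 ≤ s' := gcd_nonneg _ _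
  set xg : ZMod M0 := ((s' : ℤ) : ZMod M0) with hxg
  have himg : ((A.image F : Finset (ZMod M0)) : Set (ZMod M0))
      = (AddSubgroup.zmultiples xg : Set (ZMod M0)) := by
    ext z
    simp only [Finset.coe_image, Set.mem_image, Finset.mem_coe, SetLike.mem_coe,
      AddSubgroup.mem_zmultiples_iff]
    constructor
    · rintro ⟨a, ha, rfl⟩
      have hdvd : s' ∣ Sv n N a := by
        rw [Sv]
        refine Finset.dvd_sum fun i _ => ?_
        by_cases hi : i = i0
        · subst hi; rw [hA0 a ha]; simp
        · exact Dvd.dvd.mul_left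
            (Finset.gcd_dvd (Finset.mem_erase.2 ⟨hi, Finset.mem_univ i⟩)) _
      obtain ⟨k, hk⟩ := hdvd
      refine ⟨k, ?_⟩
      show k • xg = ((Sv n N a : ℤ) : ZMod M0)
      rw [hk, hxg, zsmul_eq_mul]
      push_cast
      ring
    · rintro ⟨k, rfl⟩
      obtain ⟨c, hc⟩ := gcd_eq_sum (Finset.univ.erase i0) (fun i => N / n i)
      rw [← hs'def] at hc
      set a : Fin m → ℤ := fun i => if i = i0 then 0 else (k * c i) % n i with ha
      have haA : a ∈ A := by
        rw [hA, mem_boxA]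
        refine ⟨by simp [ha], fun i hi => ?_⟩
        simp only [ha, if_neg hi]
        exact ⟨Int.emod_nonneg _ (hne i), Int.emod_lt_of_pos _ (hn i)⟩
      refine ⟨a, haA, ?_⟩
      have h1 : F a = F (fun i => if i = i0 then 0 else k * c i) := by
        apply hFcong
        intro i
        by_cases hi : i = i0
        · subst hi; simp [ha]
        · simp only [ha, if_neg hi]
          have h2 : (k * c i) % n i - k * c i = -(n i * ((k * c i) / n i)) := by
            rw [Int.emod_def]; ring
          rw [h2]
          exact dvd_neg.2 ⟨_, rfl⟩
      have h3 : Sv n N (fun i => if i = i0 then 0 else k * c i)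
          = k * s' := by
        rw [Sv, hc, Finset.mul_sum]
        rw [← Finset.sum_erase (Finset.univ) (h := ?_)]
        · refine Finset.sum_congr rfl fun i hi => ?_
          rw [if_neg (Finset.mem_erase.1 hi).1]
          ring
        · simp
      rw [h1]
      show ((Sv n N (fun i => if i = i0 then 0 else k * c i) : ℤ) : ZMod M0) = k • xg
      rw [h3, hxg, zsmul_eq_mul]
      push_cast
      ring
  -- s as gcd of N0 and s'
  have hsgcd : s = GCDMonoid.gcd N0 s' := by
    rw [hs, hs'def]
    conv_lhs => rw [← Finset.insert_erase (Finset.mem_univ i0)]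
    rw [Finset.gcd_insert]
  have hsnonneg : 0 ≤ s := by
    rw [hsgcd, ← Int.coe_gcd]; positivity
  have hcard_image : (A.image F).card = M0 / s.toNat := by
    have h1 : (A.image F).card = ((A.image F : Finset (ZMod M0)) : Set (ZMod M0)).ncard :=
      (Set.ncard_coe_finset _).symm
    rw [h1, himg, ← Nat.card_coe_set_eq]
    have h2 : Nat.card ((AddSubgroup.zmultiples xg : Set (ZMod M0)))
        = Nat.card (AddSubgroup.zmultiples xg) := rfl
    rw [h2, Nat.card_zmultiples]
    have hxg' : xg = ((s'.toNat : ℕ) : ZMod M0) := by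
      rw [hxg, ← Int.toNat_of_nonneg hs'nonneg]
      push_cast
      rfl
    rw [hxg', ZMod.addOrderOf_coe _ hM0ne]
    congr 1
    have h4 : ((M0.gcd s'.toNat : ℕ) : ℤ) = s := by
      calc ((M0.gcd s'.toNat : ℕ) : ℤ)
          = ((Int.gcd (M0 : ℤ) (s'.toNat : ℤ) : ℕ) : ℤ) := by
            rw [Int.gcd_natCast_natCast]
        _ = GCDMonoid.gcd (M0 : ℤ) ((s'.toNat : ℤ)) := Int.coe_gcd _ _
        _ = s := by rw [hM0cast, Int.toNat_of_nonneg hs'nonneg, hsgcd]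
    omega
  have hAcard : (A.card : ℤ) = N0 := by
    rw [hA, boxA, Fintype.card_piFinset]
    push_cast
    have hcc : ∀ i : Fin m,
        (((if i = i0 then ({0} : Finset ℤ) else Finset.Ico 0 (n i)).card : ℕ) : ℤ)
          = if i = i0 then 1 else n i := by
      intro i
      by_cases hi : i = i0
      · subst hi; simp
      · rw [if_neg hi, if_neg hi, Int.card_Ico]
        rw [sub_zero, Int.toNat_of_nonneg (hn i).le]
    rw [Finset.prod_congr rfl (fun i _ => hcc i)]
    rw [← Finset.prod_erase (a := i0) (f := fun i => if i = i0 then (1:ℤ) else n i) Finset.univ (by simp)]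
    rw [Finset.prod_congr rfl
      (fun i hi => if_neg (Finset.mem_erase.1 hi).1 :
        ∀ i ∈ Finset.univ.erase i0, (if i = i0 then (1:ℤ) else n i) = n i)]
    have hmp := Finset.mul_prod_erase Finset.univ n (Finset.mem_univ i0)
    rw [hN0def, hN, ← hmp, Int.mul_ediv_cancel_left _ (hne i0)]
  have hAcard' : A.card = M0 := by omega
  have hKf : K0 = s.toNat := by
    have hMain : A.card = (A.image F).card * K0 := by
      have h0 := Finset.card_eq_sum_card_fiberwise
        (f := F) (s := A) (t := A.image F) (fun x hx => Finset.mem_image_of_mem F hx)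
      have h1 : ∀ z ∈ A.image F, (A.filter fun x => F x = z).card = K0 := by
        intro z hz
        obtain ⟨b, hb, rfl⟩ := Finset.mem_image.1 hz
        exact hfiber b hb
      rw [h0, Finset.sum_congr rfl h1, Finset.sum_const, smul_eq_mul]
    have hdvdM0 : s.toNat ∣ M0 := by
      have hd1 : s ∣ N0 := hs ▸ Finset.gcd_dvd (Finset.mem_univ i0)
      have h2 : (s.toNat : ℤ) ∣ (M0 : ℤ) := by
        rw [Int.toNat_of_nonneg hsnonneg, hM0cast]; exact hd1
      exact_mod_cast h2
    have e1 : M0 = (M0 / s.toNat) * K0 := by rw [← hcard_image, ← hMain, hAcard']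
    have e2 : (M0 / s.toNat) * s.toNat = M0 := Nat.div_mul_cancel hdvdM0
    have hd0 : M0 / s.toNat ≠ 0 := by
      intro h; rw [h, zero_mul] at e2; exact hM0ne e2.symm
    have e3 : (M0 / s.toNat) * K0 = (M0 / s.toNat) * s.toNat := by rw [← e1, e2]
    exact Nat.eq_of_mul_eq_mul_left (Nat.pos_of_ne_zero hd0) e3
  have hfilter_eq : (A.filter fun a => N0 ∣ Sv n N a) = (A.filter fun x => F x = 0) := by
    apply Finset.filter_congr
    intro a _
    constructor
    · intro h
      show ((Sv n N a : ℤ) : ZMod M0) = 0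
      rw [ZMod.intCast_zmod_eq_zero_iff_dvd, hM0cast]
      exact h
    · intro h
      have := (ZMod.intCast_zmod_eq_zero_iff_dvd (Sv n N a) M0).1 h
      rwa [hM0cast] at this
  have final : ((Finset.filter (fun a => N0 ∣ Sv n N a) A).card : ℤ) = s := by
    rw [hfilter_eq, ← hK0, hKf, Int.toNat_of_nonneg hsnonneg]
  convert final using 4


lemma count (hm : 2 ≤ m) (i0 : Fin m) (n : Fin m → ℤ) (hn : ∀ i, 0 < n i)
    (N : ℤ) (hN : N = ∏ i, n i) (s : ℤ)
    (hs : s = Finset.gcd Finset.univ (fun i => N / n i)) :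
    2 * ∑ a ∈ boxA i0 n, Sv n N a / (N / n i0)
      = ((m : ℤ) - 1) * N - (∑ i, N / n i) + s := by
  classical
  have hne : ∀ j, n j ≠ 0 := fun j => (hn j).ne'
  have hNpos : 0 < N := hN ▸ Finset.prod_pos fun i _ => hn i
  have hdvdN : ∀ i, n i ∣ N := fun i => hN ▸ Finset.dvd_prod_of_mem n (mem_univ i)
  have hNi : ∀ i, n i * (N / n i) = N := fun i => Int.mul_ediv_cancel' (hdvdN i)
  have hNipos : ∀ i, 0 < N / n i := by
    intro i
    rcases lt_trichotomy (N / n i) 0 with h | h | h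
    · nlinarith [hNi i, hn i]
    · rw [← hNi i, h, mul_zero] at hNpos; exact absurd hNpos (lt_irrefl 0)
    · exact h
  set N0 := N / n i0 with hN0def
  have hN0pos : 0 < N0 := hNipos i0
  have hN0N : N0 ∣ N := ⟨n i0, by rw [← hNi i0]; ring⟩
  set A := boxA i0 n with hA
  have hA0 : ∀ a ∈ A, a i0 = 0 := fun a ha => ((mem_boxA i0 n a).1 (hA ▸ ha)).1
  have hAbnd : ∀ a ∈ A, ∀ i, i ≠ i0 → 0 ≤ a i ∧ a i < n i :=
    fun a ha => ((mem_boxA i0 n a).1 (hA ▸ ha)).2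
  have hAcard : (A.card : ℤ) = N0 := by
    rw [hA, boxA, Fintype.card_piFinset]
    push_cast
    have hcc : ∀ i : Fin m,
        (((if i = i0 then ({0} : Finset ℤ) else Finset.Ico 0 (n i)).card : ℕ) : ℤ)
          = if i = i0 then 1 else n i := by
      intro i
      by_cases hi : i = i0
      · subst hi; simp
      · rw [if_neg hi, if_neg hi, Int.card_Ico]
        rw [sub_zero, Int.toNat_of_nonneg (hn i).le]
    rw [Finset.prod_congr rfl (fun i _ => hcc i)]
    rw [← Finset.prod_erase (a := i0) (f := fun i => if i = i0 then (1:ℤ) else n i)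
      Finset.univ (by simp)]
    rw [Finset.prod_congr rfl
      (fun i hi => if_neg (Finset.mem_erase.1 hi).1 :
        ∀ i ∈ Finset.univ.erase i0, (if i = i0 then (1:ℤ) else n i) = n i)]
    have hmp := Finset.mul_prod_erase Finset.univ n (Finset.mem_univ i0)
    rw [hN0def, hN, ← hmp, Int.mul_ediv_cancel_left _ (hne i0)]
  set C := ∑ j ∈ Finset.univ.erase i0, (n j - 1) * (N / n j) with hCdef
  -- the reflection involution
  set tau : (Fin m → ℤ) → (Fin m → ℤ) := fun a i => if i = i0 then 0 else n i - 1 - a i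
    with htau
  have htauA : ∀ a ∈ A, tau a ∈ A := by
    intro a ha
    rw [hA, mem_boxA]
    refine ⟨by simp [htau], fun i hi => ?_⟩
    simp only [htau, if_neg hi]
    have := hAbnd a ha i hi
    omega
  have htautau : ∀ a ∈ A, tau (tau a) = a := by
    intro a ha
    funext i
    by_cases hi : i = i0
    · subst hi; simp only [htau, if_pos rfl]; exact (hA0 a ha).symm
    · simp only [htau, if_neg hi]; ring
  have hpair : ∀ a ∈ A, Sv n N a + Sv n N (tau a) = C := by
    intro a ha
    rw [Sv, Sv, ← Finset.sum_add_distrib]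
    have h1 : ∀ i ∈ Finset.univ, a i * (N / n i) + tau a i * (N / n i)
        = (if i = i0 then 0 else (n i - 1) * (N / n i)) := by
      intro i _
      by_cases hi : i = i0
      · subst hi; rw [if_pos rfl]; simp [htau, hA0 a ha]
      · rw [if_neg hi]; simp only [htau, if_neg hi]; ring
    rw [Finset.sum_congr rfl h1]
    rw [← Finset.sum_erase (a := i0)
      (f := fun i => if i = i0 then (0:ℤ) else (n i - 1) * (N / n i)) Finset.univ (by simp)]
    exact Finset.sum_congr rfl fun i hi => if_neg (Finset.mem_erase.1 hi).1
  have h2S : 2 * ∑ a ∈ A, Sv n N a = N0 * C := by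
    have hswap : ∑ a ∈ A, Sv n N (tau a) = ∑ a ∈ A, Sv n N a :=
      Finset.sum_nbij' tau tau htauA htauA htautau htautau (fun a _ => rfl)
    have h1 : (∑ a ∈ A, Sv n N a) + (∑ a ∈ A, Sv n N (tau a)) = ∑ _a ∈ A, C := by
      rw [← Finset.sum_add_distrib]; exact Finset.sum_congr rfl hpair
    rw [hswap, Finset.sum_const, nsmul_eq_mul] at h1
    rw [← hAcard]
    linarith
  -- the negation involution
  set nu : (Fin m → ℤ) → (Fin m → ℤ) := fun a i => if i = i0 then 0 else (n i - a i) % n i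
    with hnu
  have hnuA : ∀ a ∈ A, nu a ∈ A := by
    intro a _
    rw [hA, mem_boxA]
    refine ⟨by simp [hnu], fun i hi => ?_⟩
    simp only [hnu, if_neg hi]
    exact ⟨Int.emod_nonneg _ (hne i), Int.emod_lt_of_pos _ (hn i)⟩
  have hnu_add : ∀ a ∈ A, ∀ i, i ≠ i0 → (a i + nu a i) % n i = 0 := by
    intro a _ i hi
    simp only [hnu, if_neg hi]
    rw [add_comm, Int.emod_add_emod]
    have h : n i - a i + a i = n i := by ring
    rw [h, Int.emod_self]
  have hnunu : ∀ a ∈ A, nu (nu a) = a := by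
    intro a ha
    funext i
    by_cases hi : i = i0
    · subst hi; simp only [hnu, if_pos rfl]; exact (hA0 a ha).symm
    · simp only [hnu, if_neg hi]
      obtain ⟨h0, h1⟩ := hAbnd a ha i hi
      by_cases hz : a i = 0
      · rw [hz]; simp [Int.emod_self]
      · have e1 : (n i - a i) % n i = n i - a i := Int.emod_eq_of_lt (by omega) (by omega)
        rw [e1]
        have e2 : n i - (n i - a i) = a i := by ring
        rw [e2]
        exact Int.emod_eq_of_lt h0 h1
  have hdvd_pair : ∀ a ∈ A, N0 ∣ Sv n N a + Sv n N (nu a) := by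
    intro a ha
    have h1 : Sv n N a + Sv n N (nu a) = ∑ i, (a i + nu a i) * (N / n i) := by
      rw [Sv, Sv, ← Finset.sum_add_distrib]
      exact Finset.sum_congr rfl fun i _ => by ring
    rw [h1]
    refine Finset.dvd_sum fun i _ => ?_
    by_cases hi : i = i0
    · subst hi; rw [hA0 a ha]; simp [hnu]
    · obtain ⟨t, ht⟩ := Int.dvd_of_emod_eq_zero (hnu_add a ha i hi)
      have h2 : (a i + nu a i) * (N / n i) = t * (n i * (N / n i)) := by rw [ht]; ring
      rw [hNi i] at h2
      rw [h2]
      exact hN0N.mul_left t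
  set K := (A.filter fun a => N0 ∣ Sv n N a).card with hK
  have hrpair : ∀ a ∈ A, Sv n N a % N0 + Sv n N (nu a) % N0
      = if N0 ∣ Sv n N a then 0 else N0 := by
    intro a ha
    have hd := hdvd_pair a ha
    by_cases h : N0 ∣ Sv n N a
    · rw [if_pos h, Int.emod_eq_zero_of_dvd h,
        Int.emod_eq_zero_of_dvd ((dvd_add_right h).mp hd), add_zero]
    · rw [if_neg h]
      have hp0 : 0 ≤ Sv n N a % N0 := Int.emod_nonneg _ hN0pos.ne'
      have hp1 : Sv n N a % N0 < N0 := Int.emod_lt_of_pos _ hN0pos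
      have hq0 : 0 ≤ Sv n N (nu a) % N0 := Int.emod_nonneg _ hN0pos.ne'
      have hq1 : Sv n N (nu a) % N0 < N0 := Int.emod_lt_of_pos _ hN0pos
      have hpne : Sv n N a % N0 ≠ 0 := fun hh => h (Int.dvd_of_emod_eq_zero hh)
      have hsum0 : (Sv n N a % N0 + Sv n N (nu a) % N0) % N0 = 0 := by
        rw [Int.emod_add_emod, add_comm, Int.emod_add_emod, add_comm]
        exact Int.emod_eq_zero_of_dvd hd
      obtain ⟨k, hk⟩ := Int.dvd_of_emod_eq_zero hsum0
      have hppos : 0 < Sv n N a % N0 := lt_of_le_of_ne hp0 (Ne.symm hpne)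
      have hk1 : k = 1 := by
        by_contra hne1
        rcases lt_or_gt_of_ne hne1 with hlt | hgt
        · have hnp : N0 * k ≤ 0 :=
            mul_nonpos_of_nonneg_of_nonpos hN0pos.le (by omega)
          linarith
        · have h2 : 2 * N0 ≤ N0 * k := by nlinarith
          linarith
      rw [hk1, mul_one] at hk
      exact hk
  have h2r : 2 * ∑ a ∈ A, Sv n N a % N0 = N0 * ((A.card : ℤ) - (K : ℤ)) := by
    have hswap : ∑ a ∈ A, Sv n N (nu a) % N0 = ∑ a ∈ A, Sv n N a % N0 :=
      Finset.sum_nbij' nu nu hnuA hnuA hnunu hnunu (fun a _ => rfl)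
    have h1 : (∑ a ∈ A, Sv n N a % N0) + (∑ a ∈ A, Sv n N (nu a) % N0)
        = ∑ a ∈ A, (if N0 ∣ Sv n N a then 0 else N0) := by
      rw [← Finset.sum_add_distrib]; exact Finset.sum_congr rfl hrpair
    rw [hswap, Finset.sum_ite, Finset.sum_const_zero, Finset.sum_const, zero_add,
      nsmul_eq_mul] at h1
    have hcards : (Finset.filter (fun a => ¬ N0 ∣ Sv n N a) A).card = A.card - K := by
      have := Finset.card_filter_add_card_filter_not
        (s := A) (p := fun a => N0 ∣ Sv n N a)
      omega
    have hKle : K ≤ A.card := by rw [hK]; exact Finset.card_filter_le _ _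
    rw [hcards] at h1
    have hcast : ((A.card - K : ℕ) : ℤ) = (A.card : ℤ) - (K : ℤ) := by
      push_cast [Nat.cast_sub hKle]; ring
    rw [hcast] at h1
    linarith
  have hdivsum : N0 * ∑ a ∈ A, Sv n N a / N0
      = (∑ a ∈ A, Sv n N a) - ∑ a ∈ A, Sv n N a % N0 := by
    rw [Finset.mul_sum, ← Finset.sum_sub_distrib]
    exact Finset.sum_congr rfl fun a _ => by
      have := Int.mul_ediv_add_emod (Sv n N a) N0; linarith
  have hKs : (K : ℤ) = s := by
    have := K_eq (by omega : 1 ≤ m) i0 n hn N hN s hs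
    rw [hK]
    convert this using 4
  have hmain : N0 * (2 * ∑ a ∈ A, Sv n N a / N0) = N0 * (C - N0 + (K : ℤ)) := by
    have e1 : N0 * (2 * ∑ a ∈ A, Sv n N a / N0) = 2 * (N0 * ∑ a ∈ A, Sv n N a / N0) := by
      ring
    rw [e1, hdivsum]
    have e2 : 2 * ((∑ a ∈ A, Sv n N a) - ∑ a ∈ A, Sv n N a % N0)
        = (2 * ∑ a ∈ A, Sv n N a) - 2 * ∑ a ∈ A, Sv n N a % N0 := by ring
    rw [e2, h2S, h2r, hAcard]
    ring
  have hfin : 2 * ∑ a ∈ A, Sv n N a / N0 = C - N0 + (K : ℤ) :=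
    mul_left_cancel₀ hN0pos.ne' hmain
  rw [hfin, hKs]
  have hC2 : C = ((m : ℤ) - 1) * N - ∑ i ∈ Finset.univ.erase i0, (N / n i) := by
    rw [hCdef]
    have h1 : ∀ j ∈ Finset.univ.erase i0, (n j - 1) * (N / n j) = N - N / n j := by
      intro j _
      rw [sub_mul, one_mul, hNi j]
    rw [Finset.sum_congr rfl h1, Finset.sum_sub_distrib, Finset.sum_const,
      Finset.card_erase_of_mem (Finset.mem_univ i0), Finset.card_univ, Fintype.card_fin,
      nsmul_eq_mul]
    have : ((m - 1 : ℕ) : ℤ) = (m : ℤ) - 1 := by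
      have : 1 ≤ m := by omega
      push_cast [Nat.cast_sub this]
      ring
    rw [this]
  have hNiSplit : ∑ i, N / n i = N0 + ∑ i ∈ Finset.univ.erase i0, N / n i := by
    rw [← Finset.add_sum_erase _ _ (Finset.mem_univ i0)]
  rw [hC2, hNiSplit]
  ring

end NWaux


/-- Example 5.1(6) combined with Proposition 4.1 of Neumann–Wahl, "The End Curve
Theorem for normal complex surface singularities".  For integers `m ≥ 2` and
`n 0, …, n (m-1) ≥ 2`, set `N = ∏ n i`, `Ni i = N / n i`,
`s = gcd (Ni 0, …, Ni (m-1))`.  Let `Ĝ = ℤ^m / L` where `L` is generated by the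
elements `n 0 • e 0 - n i • e i` (`i ≠ 0`), let `w : Ĝ → ℤ` be the homomorphism
induced by `e i ↦ Ni i / s`, and let `S ⊆ Ĝ` be the image of `ℕ^m`.  Then the
gap set `{g : w g ≥ 0} \ S` is finite of cardinality `δ`, with
`2δ = (m-1) N - ∑ Ni i + s`. -/
theorem delta_invariant_of_monomial_curve (m : ℕ) (hm : 2 ≤ m)
    (i0 : Fin m) (hi0 : (i0 : ℕ) = 0)
    (n : Fin m → ℤ) (hn : ∀ i, 2 ≤ n i)
    (N : ℤ) (hN : N = ∏ i, n i)
    (s : ℤ) (hs : s = Finset.gcd Finset.univ (fun i => N / n i))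
    (L : AddSubgroup (Fin m → ℤ))
    (hL : L = AddSubgroup.closure
      {v | ∃ i : Fin m, i ≠ i0 ∧ v = Pi.single i0 (n i0) - Pi.single i (n i)})
    (w : ((Fin m → ℤ) ⧸ L) →+ ℤ)
    (hw : ∀ i : Fin m, w (QuotientAddGroup.mk (Pi.single i 1)) = N / n i / s)
    (S : Set ((Fin m → ℤ) ⧸ L))
    (hS : S = QuotientAddGroup.mk '' {x : Fin m → ℤ | ∀ i, 0 ≤ x i})
    (gap : Set ((Fin m → ℤ) ⧸ L))
    (hgap : gap = {g | 0 ≤ w g} \ S) :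
    gap.Finite ∧
    2 * (gap.ncard : ℤ) = ((m : ℤ) - 1) * N - (∑ i, N / n i) + s := by

  classical
  have hnpos : ∀ i, 0 < n i := fun i => by linarith [hn i]
  have hne : ∀ j, n j ≠ 0 := fun j => (hnpos j).ne'
  have hNpos : 0 < N := hN ▸ Finset.prod_pos fun i _ => hnpos i
  have hdvdN : ∀ i, n i ∣ N := fun i => hN ▸ Finset.dvd_prod_of_mem n (Finset.mem_univ i)
  have hNi : ∀ i, n i * (N / n i) = N := fun i => Int.mul_ediv_cancel' (hdvdN i)
  have hNipos : ∀ i, 0 < N / n i := by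
    intro i
    rcases lt_trichotomy (N / n i) 0 with h | h | h
    · nlinarith [hNi i, hnpos i]
    · rw [← hNi i, h, mul_zero] at hNpos; exact absurd hNpos (lt_irrefl 0)
    · exact h
  have hsdvd : ∀ i, s ∣ N / n i := fun i => hs ▸ Finset.gcd_dvd (Finset.mem_univ i)
  have hsnonneg : 0 ≤ s := hs ▸ NWaux.gcd_nonneg _ _
  have hspos : 0 < s := by
    rcases eq_or_lt_of_le hsnonneg with h | h
    · exfalso
      have := hsdvd i0
      rw [← h] at this
      have := zero_dvd_iff.1 this
      have h2 := hNipos i0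
      omega
    · exact h
  -- the value of w on classes
  have hwmk : ∀ x : Fin m → ℤ,
      w (QuotientAddGroup.mk x) = ∑ i, x i * (N / n i / s) := by
    intro x
    have h1 : x = ∑ i, Pi.single i (x i) := (Finset.univ_sum_single x).symm
    have h2 : (QuotientAddGroup.mk x : (Fin m → ℤ) ⧸ L)
        = ∑ i, (QuotientAddGroup.mk (Pi.single i (x i)) : (Fin m → ℤ) ⧸ L) := by
      conv_lhs => rw [h1]
      exact map_sum (QuotientAddGroup.mk' L) _ _
    rw [h2, map_sum]
    refine Finset.sum_congr rfl fun i _ => ?_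
    have h3 : (Pi.single i (x i) : Fin m → ℤ) = x i • (Pi.single i (1 : ℤ) : Fin m → ℤ) := by
      rw [← Pi.single_smul, smul_eq_mul, mul_one]
    have h4 : (QuotientAddGroup.mk (Pi.single i (x i)) : (Fin m → ℤ) ⧸ L)
        = x i • (QuotientAddGroup.mk (Pi.single i (1:ℤ)) : (Fin m → ℤ) ⧸ L) := by
      rw [h3]
      exact map_zsmul (QuotientAddGroup.mk' L) _ _
    rw [h4, map_zsmul, hw i, smul_eq_mul]
  have hsv : ∀ x : Fin m → ℤ, (∑ i, x i * (N / n i / s)) * s = NWaux.Sv n N x := by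
    intro x
    rw [Finset.sum_mul, NWaux.Sv]
    exact Finset.sum_congr rfl fun i _ => by
      rw [mul_assoc, Int.ediv_mul_cancel (hsdvd i)]
  have hwiff : ∀ x : Fin m → ℤ,
      0 ≤ w (QuotientAddGroup.mk x) ↔ 0 ≤ NWaux.Sv n N x := by
    intro x
    rw [hwmk x]
    constructor
    · intro h
      rw [← hsv x]
      exact mul_nonneg h hspos.le
    · intro h
      rw [← hsv x] at h
      by_contra hcon
      push_neg at hcon
      nlinarith
  -- membership in L
  have hmemL : ∀ x : Fin m → ℤ, x ∈ L ↔
      (∀ j, j ≠ i0 → n j ∣ x j) ∧ NWaux.A0 i0 n x = 0 := by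
    intro x
    rw [hL]
    exact NWaux.mem_L_iff i0 n hnpos x
  have hA0add : ∀ (y u : Fin m → ℤ), (∀ j, j ≠ i0 → n j ∣ u j) →
      NWaux.A0 i0 n (y + u) = NWaux.A0 i0 n y + NWaux.A0 i0 n u := by
    intro y u hu
    simp only [NWaux.A0, Pi.add_apply]
    have hsum : ∑ j ∈ Finset.univ.erase i0, (y j + u j) / n j
        = ∑ j ∈ Finset.univ.erase i0, (y j / n j + u j / n j) := by
      refine Finset.sum_congr rfl fun j hj => ?_
      obtain ⟨t, ht⟩ := hu j (Finset.mem_erase.1 hj).1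
      rw [ht, Int.add_mul_ediv_left _ _ (hne j), Int.mul_ediv_cancel_left _ (hne j)]
    rw [hsum, Finset.sum_add_distrib]
    ring
  have hA0inv : ∀ x y : Fin m → ℤ, x - y ∈ L → NWaux.A0 i0 n x = NWaux.A0 i0 n y := by
    intro x y hxy
    obtain ⟨hd, h0⟩ := (hmemL _).1 hxy
    have hxe : x = y + (x - y) := by abel
    have hd' : ∀ j, j ≠ i0 → n j ∣ (x - y) j := by
      intro j hj
      exact hd j hj
    rw [hxe, hA0add y (x - y) hd', h0, add_zero]
  -- the reduction map
  set red : (Fin m → ℤ) → (Fin m → ℤ) :=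
    fun x i => if i = i0 then NWaux.A0 i0 n x else x i % n i with hreddef
  have hredmk : ∀ x : Fin m → ℤ,
      (QuotientAddGroup.mk (red x) : (Fin m → ℤ) ⧸ L) = QuotientAddGroup.mk x := by
    intro x
    rw [QuotientAddGroup.eq_iff_sub_mem, hmemL]
    constructor
    · intro j hj
      simp only [hreddef, Pi.sub_apply, if_neg hj]
      have h1 : x j % n j - x j = -(n j * (x j / n j)) := by
        rw [Int.emod_def]; ring
      rw [h1]
      exact dvd_neg.2 ⟨_, rfl⟩
    · have hsub : red x - x = -x + red x := by abel
      have h2 : NWaux.A0 i0 n (red x) = NWaux.A0 i0 n x := by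
        have hz : ∀ c : ℤ, ∑ j ∈ Finset.univ.erase i0,
            (if j = i0 then c else x j % n j) / n j = 0 := by
          intro c
          refine Finset.sum_eq_zero fun j hj => ?_
          rw [if_neg (Finset.mem_erase.1 hj).1]
          exact Int.ediv_eq_zero_of_lt (Int.emod_nonneg _ (hne j))
            (Int.emod_lt_of_pos _ (hnpos j))
        simp only [NWaux.A0, hreddef, if_pos rfl]
        rw [hz _, mul_zero, add_zero]
      have h3 : NWaux.A0 i0 n (x + (red x - x)) = NWaux.A0 i0 n x + NWaux.A0 i0 n (red x - x) := by
        apply hA0add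
        intro j hj
        simp only [hreddef, Pi.sub_apply, if_neg hj]
        have h1 : x j % n j - x j = -(n j * (x j / n j)) := by
          rw [Int.emod_def]; ring
        rw [h1]
        exact dvd_neg.2 ⟨_, rfl⟩
      have h4 : x + (red x - x) = red x := by abel
      rw [h4] at h3
      rw [h2] at h3
      linarith
  -- membership in S
  have hSmem : ∀ x : Fin m → ℤ,
      (QuotientAddGroup.mk x : (Fin m → ℤ) ⧸ L) ∈ S ↔ 0 ≤ NWaux.A0 i0 n x := by
    intro x
    constructor
    · intro hx
      rw [hS] at hx
      obtain ⟨z, hz, hzx⟩ := hx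
      have hzL : z - x ∈ L := (QuotientAddGroup.eq_iff_sub_mem).1 hzx
      have h1 : NWaux.A0 i0 n z = NWaux.A0 i0 n x := hA0inv z x hzL
      rw [← h1, NWaux.A0]
      have h2 : 0 ≤ ∑ j ∈ Finset.univ.erase i0, z j / n j :=
        Finset.sum_nonneg fun j _ => Int.ediv_nonneg (hz j) (hnpos j).le
      have h3 := hz i0
      nlinarith [hnpos i0]
    · intro hx
      rw [hS]
      refine ⟨red x, ?_, hredmk x⟩
      intro i
      by_cases hi : i = i0
      · subst hi; simpa [hreddef] using hx
      · simp only [hreddef, if_neg hi]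
        exact Int.emod_nonneg _ (hne i)
  -- the explicit box
  set N0 := N / n i0 with hN0def
  have hN0pos : 0 < N0 := hNipos i0
  set C := ∑ j ∈ Finset.univ.erase i0, (n j - 1) * (N / n j) with hCdef
  set Bfin := (Fintype.piFinset fun i =>
      if i = i0 then Finset.Ico (-C) 0 else Finset.Ico 0 (n i)).filter
      (fun x => 0 ≤ NWaux.Sv n N x) with hBdef
  have hmemB : ∀ x : Fin m → ℤ, x ∈ Bfin ↔
      ((-C ≤ x i0 ∧ x i0 < 0) ∧ ∀ i, i ≠ i0 → 0 ≤ x i ∧ x i < n i) ∧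
        0 ≤ NWaux.Sv n N x := by
    intro x
    rw [hBdef, Finset.mem_filter, Fintype.mem_piFinset]
    constructor
    · rintro ⟨h1, h2⟩
      refine ⟨⟨?_, fun i hi => ?_⟩, h2⟩
      · have := h1 i0; rw [if_pos rfl, Finset.mem_Ico] at this; exact this
      · have := h1 i; rw [if_neg hi, Finset.mem_Ico] at this; exact this
    · rintro ⟨⟨h0, h1⟩, h2⟩
      refine ⟨fun i => ?_, h2⟩
      by_cases hi : i = i0
      · subst hi; rw [if_pos rfl, Finset.mem_Ico]; exact h0
      · rw [if_neg hi, Finset.mem_Ico]; exact h1 i hi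

  -- Sv decomposition via update
  have hSvupd : ∀ x : Fin m → ℤ,
      NWaux.Sv n N x = x i0 * N0 + NWaux.Sv n N (Function.update x i0 0) := by
    intro x
    have e1 : NWaux.Sv n N x
        = x i0 * (N / n i0) + ∑ j ∈ Finset.univ.erase i0, x j * (N / n j) :=
      (Finset.add_sum_erase _ (fun i => x i * (N / n i)) (Finset.mem_univ i0)).symm
    have e2 : NWaux.Sv n N (Function.update x i0 0)
        = Function.update x i0 0 i0 * (N / n i0)
          + ∑ j ∈ Finset.univ.erase i0, Function.update x i0 0 j * (N / n j) :=
      (Finset.add_sum_erase _ (fun i => Function.update x i0 0 i * (N / n i))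
        (Finset.mem_univ i0)).symm
    have e3 : ∑ j ∈ Finset.univ.erase i0, Function.update x i0 0 j * (N / n j)
        = ∑ j ∈ Finset.univ.erase i0, x j * (N / n j) :=
      Finset.sum_congr rfl fun j hj => by
        rw [Function.update_of_ne (Finset.mem_erase.1 hj).1]
    rw [e1, e2, e3, Function.update_self, zero_mul, zero_add, hN0def]
  have hupdA : ∀ x ∈ Bfin, Function.update x i0 0 ∈ NWaux.boxA i0 n := by
    intro x hx
    obtain ⟨⟨h0, h1⟩, h2⟩ := (hmemB x).1 hx
    rw [NWaux.mem_boxA]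
    refine ⟨Function.update_self _ _ _, fun i hi => ?_⟩
    rw [Function.update_of_ne hi]
    exact h1 i hi
  have hboxbnd := fun a (ha : a ∈ NWaux.boxA i0 n) => (NWaux.mem_boxA i0 n a).1 ha
  have hSva_nonneg : ∀ a ∈ NWaux.boxA i0 n, 0 ≤ NWaux.Sv n N a := by
    intro a ha
    obtain ⟨h0, h1⟩ := hboxbnd a ha
    rw [NWaux.Sv]
    refine Finset.sum_nonneg fun i _ => ?_
    by_cases hi : i = i0
    · subst hi; rw [h0, zero_mul]
    · exact mul_nonneg (h1 i hi).1 (hNipos i).le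
  have hSvaC : ∀ a ∈ NWaux.boxA i0 n, NWaux.Sv n N a ≤ C := by
    intro a ha
    obtain ⟨h0, h1⟩ := hboxbnd a ha
    have e1 : NWaux.Sv n N a = ∑ j ∈ Finset.univ.erase i0, a j * (N / n j) := by
      rw [NWaux.Sv, ← Finset.add_sum_erase _ (fun i => a i * (N / n i))
        (Finset.mem_univ i0), h0, zero_mul, zero_add]
    rw [e1, hCdef]
    refine Finset.sum_le_sum fun j hj => ?_
    have hb := h1 j (Finset.mem_erase.1 hj).1
    exact mul_le_mul_of_nonneg_right (by omega) (hNipos j).le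
  -- gap as image of the box
  have hgap_eq : gap = QuotientAddGroup.mk '' (↑Bfin : Set (Fin m → ℤ)) := by
    rw [hgap]
    ext g
    simp only [Set.mem_diff, Set.mem_setOf_eq, Set.mem_image, Finset.mem_coe]
    constructor
    · rintro ⟨hw0, hnS⟩
      obtain ⟨x, rfl⟩ := QuotientAddGroup.mk_surjective g
      refine ⟨red x, ?_, hredmk x⟩
      have hw1 : 0 ≤ NWaux.Sv n N (red x) :=
        (hwiff (red x)).1 (by rw [hredmk x]; exact hw0)
      have hA0neg : NWaux.A0 i0 n x < 0 := by
        by_contra hcon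
        push_neg at hcon
        exact hnS ((hSmem x).2 hcon)
      rw [hmemB]
      have hredi0 : red x i0 = NWaux.A0 i0 n x := by simp [hreddef]
      refine ⟨⟨⟨?_, by rw [hredi0]; exact hA0neg⟩, fun i hi => ?_⟩, hw1⟩
      · rw [hredi0]
        have h5 := hSvupd (red x)
        have hupd : Function.update (red x) i0 0 ∈ NWaux.boxA i0 n := by
          rw [NWaux.mem_boxA]
          refine ⟨Function.update_self _ _ _, fun i hi => ?_⟩
          rw [Function.update_of_ne hi]
          simp only [hreddef, if_neg hi]
          exact ⟨Int.emod_nonneg _ (hne i), Int.emod_lt_of_pos _ (hnpos i)⟩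
        have h6 := hSvaC _ hupd
        rw [hredi0] at h5
        have h8 : NWaux.A0 i0 n x * N0 ≤ NWaux.A0 i0 n x * 1 :=
          mul_le_mul_of_nonpos_left (by omega : (1:ℤ) ≤ N0) hA0neg.le
        rw [mul_one] at h8
        linarith
      · simp only [hreddef, if_neg hi]
        exact ⟨Int.emod_nonneg _ (hne i), Int.emod_lt_of_pos _ (hnpos i)⟩
    · rintro ⟨x, hxB, rfl⟩
      obtain ⟨⟨⟨hc0, hc1⟩, hb⟩, hsv0⟩ := (hmemB x).1 hxB
      refine ⟨(hwiff x).2 hsv0, ?_⟩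
      intro hSx
      have h0 := (hSmem x).1 hSx
      have hA0x : NWaux.A0 i0 n x = x i0 := by
        have hz : ∑ j ∈ Finset.univ.erase i0, x j / n j = 0 :=
          Finset.sum_eq_zero fun j hj => Int.ediv_eq_zero_of_lt
            (hb j (Finset.mem_erase.1 hj).1).1 (hb j (Finset.mem_erase.1 hj).1).2
        rw [NWaux.A0, hz, mul_zero, add_zero]
      omega
  -- injectivity on the box
  have hinj : Set.InjOn (QuotientAddGroup.mk : (Fin m → ℤ) → (Fin m → ℤ) ⧸ L)
      (↑Bfin : Set (Fin m → ℤ)) := by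
    intro x hx y hy hxy
    rw [Finset.mem_coe] at hx hy
    obtain ⟨⟨hcx, hbx⟩, _⟩ := (hmemB x).1 hx
    obtain ⟨⟨hcy, hby⟩, _⟩ := (hmemB y).1 hy
    have hxyL : x - y ∈ L := (QuotientAddGroup.eq_iff_sub_mem).1 hxy
    obtain ⟨hd, h0⟩ := (hmemL _).1 hxyL
    have hco : ∀ j, j ≠ i0 → x j = y j := by
      intro j hj
      have h1 := hd j hj
      rw [Pi.sub_apply] at h1
      have h2 : x j - y j = 0 := by
        refine Int.eq_zero_of_abs_lt_dvd h1 ?_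
        have b1 := hbx j hj
        have b2 := hby j hj
        rw [abs_lt]
        omega
      linarith
    have h3 : NWaux.A0 i0 n (x - y) = (x - y) i0 := by
      have hz : ∑ j ∈ Finset.univ.erase i0, (x - y) j / n j = 0 :=
        Finset.sum_eq_zero fun j hj => by
          rw [Pi.sub_apply, hco j (Finset.mem_erase.1 hj).1, sub_self, Int.zero_ediv]
      rw [NWaux.A0, hz, mul_zero, add_zero]
    rw [h3, Pi.sub_apply] at h0
    funext i
    by_cases hi : i = i0
    · subst hi; linarith
    · exact hco i hi
  have hfin : gap.Finite := by
    rw [hgap_eq]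
    exact Bfin.finite_toSet.image _
  have hncard : (gap.ncard : ℤ) = (Bfin.card : ℤ) := by
    rw [hgap_eq, Set.ncard_image_of_injOn hinj, Set.ncard_coe_finset]
  -- cardinality of the box, fiberwise over boxA
  have hcard : (Bfin.card : ℤ) = ∑ a ∈ NWaux.boxA i0 n, NWaux.Sv n N a / N0 := by
    have h0 : Bfin.card = ∑ a ∈ NWaux.boxA i0 n,
        (Bfin.filter fun x => Function.update x i0 0 = a).card :=
      Finset.card_eq_sum_card_fiberwise hupdA
    have hfib : ∀ a ∈ NWaux.boxA i0 n,
        ((Bfin.filter fun x => Function.update x i0 0 = a).card : ℤ)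
          = NWaux.Sv n N a / N0 := by
      intro a ha
      obtain ⟨ha0, hab⟩ := (NWaux.mem_boxA i0 n a).1 ha
      have hq0 : 0 ≤ NWaux.Sv n N a / N0 := Int.ediv_nonneg (hSva_nonneg a ha) hN0pos.le
      have hqC : NWaux.Sv n N a / N0 ≤ C :=
        le_trans (Int.ediv_le_self _ (hSva_nonneg a ha)) (hSvaC a ha)
      have hbij : (Bfin.filter fun x => Function.update x i0 0 = a).card
          = (Finset.Ico (-(NWaux.Sv n N a / N0)) 0).card := by
        apply Finset.card_nbij' (fun x => x i0) (fun t => Function.update a i0 t)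
        · intro x hx
          rw [Finset.mem_coe, Finset.mem_filter] at hx
          obtain ⟨hxB, hxa⟩ := hx
          obtain ⟨⟨hc, hb⟩, hsv0⟩ := (hmemB x).1 hxB
          rw [Finset.mem_coe, Finset.mem_Ico]
          refine ⟨?_, hc.2⟩
          have h5 := hSvupd x
          rw [hxa] at h5
          have h6 : -x i0 ≤ NWaux.Sv n N a / N0 := by
            rw [Int.le_ediv_iff_mul_le hN0pos]
            linarith
          linarith
        · intro t ht
          rw [Finset.mem_coe, Finset.mem_Ico] at ht
          rw [Finset.mem_coe, Finset.mem_filter]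
          have hupd0 : Function.update (Function.update a i0 t) i0 0 = a := by
            funext i
            by_cases hi : i = i0
            · subst hi; rw [Function.update_self, ha0]
            · rw [Function.update_of_ne hi, Function.update_of_ne hi]
          have hSvt : NWaux.Sv n N (Function.update a i0 t)
              = t * N0 + NWaux.Sv n N a := by
            have h5 := hSvupd (Function.update a i0 t)
            rw [hupd0, Function.update_self] at h5
            exact h5
          refine ⟨?_, hupd0⟩
          rw [hmemB]
          have h7 : (-t) * N0 ≤ NWaux.Sv n N a :=
            (Int.le_ediv_iff_mul_le hN0pos).1 (by linarith [ht.1])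
          refine ⟨⟨?_, fun i hi => ?_⟩, ?_⟩
          · dsimp only; rw [Function.update_self]
            exact ⟨by linarith [ht.1, hqC], ht.2⟩
          · dsimp only; rw [Function.update_of_ne hi]
            exact hab i hi
          · rw [hSvt]
            linarith
        · intro x hx
          rw [Finset.mem_coe, Finset.mem_filter] at hx
          dsimp only; rw [← hx.2, Function.update_idem, Function.update_eq_self]
        · intro t ht
          dsimp only; rw [Function.update_self]
      rw [hbij, Int.card_Ico]
      have : (0 : ℤ) - -(NWaux.Sv n N a / N0) = NWaux.Sv n N a / N0 := by ring
      rw [this, Int.toNat_of_nonneg hq0]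
    rw [h0]
    push_cast
    exact Finset.sum_congr rfl hfib
  refine ⟨hfin, ?_⟩
  rw [hncard, hcard]
  have hcount := NWaux.count hm i0 n hnpos N hN s hs
  rw [← hN0def] at hcount
  exact hcount
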